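/- For every continuous vector field f : ℝⁿ → ℝⁿ, the Zygmund seminorm satisfies ‖f‖_Z ≤ 4 ‖f‖_Q, where ‖f‖_Z = sup_{x ∈ ℝⁿ, y ≠ 0} |f(x+y) + f(x-y) - 2f(x)| / |y| and ‖f‖_Q is the Q-seminorm. In particular, every C^Q vector field satisfies the Zygmund condition. -/

import Mathlib

lemma zyg_aux {E : Type*} [NormedAddCommGroup E] [InnerProductSpace ℝ E]
    (y w fpw fmw fpy fmy f0 : E) :
    (inner ℝ w (fpy + fmy - 2 • f0) : ℝ) =
      ((inner ℝ w (fpw - f0) : ℝ) - (inner ℝ (-w) (fmw - f0) : ℝ))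
      - (((inner ℝ (y + w) (fpw - fmy) : ℝ) - (inner ℝ (y - w) (fmw - fmy) : ℝ))
        + ((inner ℝ (w - y) (fpw - fpy) : ℝ) - (inner ℝ (-(y + w)) (fmw - fpy) : ℝ))) / 2 := by
  simp only [inner_add_left, inner_sub_left, inner_sub_right, inner_add_right,
    inner_neg_left, two_smul, inner_add_right]
  ring

set_option maxHeartbeats 1600000 in
/-- For a continuous vector field, the Zygmund seminorm is at most four times
the Q-seminorm: if `Q` bounds all Q-quotients, then `4 * Q` bounds all Zygmund
quotients. In particular every `C^Q` vector field satisfies the Zygmund condition. -/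
theorem zygmund_le_four_Q {n : ℕ} (f : EuclideanSpace ℝ (Fin n) → EuclideanSpace ℝ (Fin n))
    (hf : Continuous f) (Q : ℝ)
    (hQ : ∀ (x a b : EuclideanSpace ℝ (Fin n)), ‖a‖ = ‖b‖ → a ≠ 0 →
      |(inner ℝ a (f (x + a) - f x) : ℝ) / ‖a‖ ^ 2 -
        (inner ℝ b (f (x + b) - f x) : ℝ) / ‖b‖ ^ 2| ≤ Q) :
    ∀ (x y : EuclideanSpace ℝ (Fin n)), y ≠ 0 →
      ‖f (x + y) + f (x - y) - 2 • f x‖ / ‖y‖ ≤ 4 * Q := by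
  intro x y hy
  have hr : (0:ℝ) < ‖y‖ := norm_pos_iff.mpr hy
  set r : ℝ := ‖y‖ with hrdef
  have hQ0 : (0:ℝ) ≤ Q := by simpa using hQ x y y rfl hy
  -- rescaled form of the hypothesis
  have key : ∀ (z a b : EuclideanSpace ℝ (Fin n)), ‖a‖ = ‖b‖ → a ≠ 0 →
      |(inner ℝ a (f (z + a) - f z) : ℝ) - (inner ℝ b (f (z + b) - f z) : ℝ)| ≤ Q * ‖a‖ ^ 2 := by
    intro z a b hab ha
    have hpos : (0:ℝ) < ‖a‖ ^ 2 := by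
      have : (0:ℝ) < ‖a‖ := norm_pos_iff.mpr ha
      positivity
    have h := hQ z a b hab ha
    rw [← hab, div_sub_div_same, abs_div, abs_of_pos hpos, div_le_iff₀ hpos] at h
    exact h
  set v : EuclideanSpace ℝ (Fin n) := f (x + y) + f (x - y) - 2 • f x with hv
  -- radial bound
  have hD : |(inner ℝ y v : ℝ)| ≤ Q * r ^ 2 := by
    have h := key x y (-y) (by simp) hy
    have e : x + -y = x - y := by abel
    rw [e] at h
    have e2 : (inner ℝ y (f (x + y) - f x) : ℝ) - (inner ℝ (-y) (f (x - y) - f x) : ℝ)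
        = inner ℝ y v := by
      simp [hv, inner_sub_right, inner_add_right, inner_neg_left, two_smul]
      ring
    rwa [e2] at h
  set c : ℝ := (inner ℝ y v : ℝ) / r ^ 2 with hc
  set p : EuclideanSpace ℝ (Fin n) := v - c • y with hp
  have hyp : (inner ℝ y p : ℝ) = 0 := by
    have hyy : (inner ℝ y y : ℝ) = r ^ 2 := by
      rw [real_inner_self_eq_norm_sq]
    rw [hp, inner_sub_right, real_inner_smul_right, hyy, hc]
    field_simp
    ring
  have hv2 : v = c • y + p := by rw [hp]; abel
  have hcy : ‖c • y‖ ≤ Q * r := by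
    rw [norm_smul, Real.norm_eq_abs, hc, abs_div, abs_of_pos (pow_pos hr 2)]
    rw [div_mul_eq_mul_div, div_le_iff₀ (pow_pos hr 2)]
    nlinarith [hD, abs_nonneg ((inner ℝ y v : ℝ))]
  by_cases hp0 : p = 0
  · -- v is parallel to y
    rw [div_le_iff₀ hr]
    have : ‖v‖ ≤ Q * r := by rw [hv2, hp0, add_zero]; exact hcy
    nlinarith
  · have hpn : (0:ℝ) < ‖p‖ := norm_pos_iff.mpr hp0
    set w : EuclideanSpace ℝ (Fin n) := (r / ‖p‖) • p with hw
    have hwn : ‖w‖ = r := by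
      rw [hw, norm_smul, Real.norm_eq_abs, abs_of_pos (div_pos hr hpn)]
      field_simp
    have hw0 : w ≠ 0 := by
      intro h; rw [h, norm_zero] at hwn; exact hr.ne hwn
    have hyw : (inner ℝ y w : ℝ) = 0 := by
      rw [hw, real_inner_smul_right, hyp, mul_zero]
    have hs1 : ‖y + w‖ ^ 2 = 2 * r ^ 2 := by
      rw [norm_add_sq_real, hyw, hwn]; ring
    have hs2 : ‖y - w‖ ^ 2 = 2 * r ^ 2 := by
      rw [norm_sub_sq_real, hyw, hwn]; ring
    have hs3 : ‖w - y‖ ^ 2 = 2 * r ^ 2 := by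
      rw [norm_sub_sq_real, real_inner_comm, hyw, hwn]; ring
    have hab1 : ‖y + w‖ = ‖y - w‖ := by
      have e1 : ‖y + w‖ = Real.sqrt (2 * r ^ 2) := by
        rw [← hs1, Real.sqrt_sq (norm_nonneg _)]
      have e2 : ‖y - w‖ = Real.sqrt (2 * r ^ 2) := by
        rw [← hs2, Real.sqrt_sq (norm_nonneg _)]
      rw [e1, e2]
    have hab2 : ‖w - y‖ = ‖-(y + w)‖ := by
      rw [norm_neg]
      have e1 : ‖w - y‖ = Real.sqrt (2 * r ^ 2) := by
        rw [← hs3, Real.sqrt_sq (norm_nonneg _)]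
      have e2 : ‖y + w‖ = Real.sqrt (2 * r ^ 2) := by
        rw [← hs1, Real.sqrt_sq (norm_nonneg _)]
      rw [e1, e2]
    have hne1 : y + w ≠ 0 := by
      intro h; rw [h, norm_zero] at hs1; norm_num at hs1; nlinarith
    have hne2 : w - y ≠ 0 := by
      intro h; rw [h, norm_zero] at hs3; norm_num at hs3; nlinarith
    have hA := key (x - y) (y + w) (y - w) hab1 hne1
    have eA1 : x - y + (y + w) = x + w := by abel
    have eA2 : x - y + (y - w) = x - w := by abel
    rw [eA1, eA2, hs1] at hA
    have hB := key (x + y) (w - y) (-(y + w)) hab2 hne2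
    have eB1 : x + y + (w - y) = x + w := by abel
    have eB2 : x + y + -(y + w) = x - w := by abel
    rw [eB1, eB2, hs3] at hB
    have hC := key x w (-w) (by simp) hw0
    have eC : x + -w = x - w := by abel
    rw [eC, hwn] at hC
    -- the algebraic identity combining the three Q-estimates
    have hwv : (inner ℝ w v : ℝ) =
        ((inner ℝ w (f (x + w) - f x) : ℝ) - (inner ℝ (-w) (f (x - w) - f x) : ℝ))
        - (((inner ℝ (y + w) (f (x + w) - f (x - y)) : ℝ)
              - (inner ℝ (y - w) (f (x - w) - f (x - y)) : ℝ))
          + ((inner ℝ (w - y) (f (x + w) - f (x + y)) : ℝ)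
              - (inner ℝ (-(y + w)) (f (x - w) - f (x + y)) : ℝ))) / 2 := by
      have := zyg_aux y w (f (x + w)) (f (x - w)) (f (x + y)) (f (x - y)) (f x)
      rwa [← hv] at this
    have h3 : |(inner ℝ w v : ℝ)| ≤ 3 * Q * r ^ 2 := by
      obtain ⟨a1, a2⟩ := abs_le.mp hA
      obtain ⟨b1, b2⟩ := abs_le.mp hB
      obtain ⟨c1, c2⟩ := abs_le.mp hC
      rw [abs_le]
      constructor <;> rw [hwv] <;> linarith
    have hpw : (inner ℝ w v : ℝ) = r * ‖p‖ := by
      have hpy : (inner ℝ p y : ℝ) = 0 := by rw [real_inner_comm]; exact hyp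
      have : (inner ℝ w v : ℝ) = (r / ‖p‖) * (inner ℝ p (c • y + p) : ℝ) := by
        rw [hw, ← hv2, real_inner_smul_left]
      rw [this, inner_add_right, real_inner_smul_right, hpy, mul_zero, zero_add,
        real_inner_self_eq_norm_sq]
      rw [pow_two, ← mul_assoc, div_mul_cancel₀ r hpn.ne']
    have hple : ‖p‖ ≤ 3 * Q * r := by
      rw [hpw] at h3
      have : r * ‖p‖ ≤ 3 * Q * r ^ 2 := le_trans (le_abs_self _) h3
      nlinarith
    rw [div_le_iff₀ hr]
    have htri : ‖v‖ ≤ ‖c • y‖ + ‖p‖ := by rw [hv2]; exact norm_add_le _ _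
    nlinarith
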